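/- For every integer n ≥ 1 and all α = (α_1, …, α_{n+1}) ∈ ℝ^{n+1}, β = (β_1, …, β_n) ∈ ℝ^n and t ∈ ℝ, one has r(t, α, β) ≥ 0. -/

import Mathlib

open Finset

section Aux
open MeasureTheory

lemma symm_double (N : ℕ) (f : ℕ → ℕ → ℝ) (hs : ∀ k l, f k l = f l k) (hd : ∀ k, f k k = 0) :
    ∑ k ∈ Icc 1 N, ∑ l ∈ Icc 1 N, f k l = 2 * ∑ k ∈ Icc 1 N, ∑ l ∈ Ioc k N, f k l := by
  induction N with
  | zero => simp
  | succ N ih =>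
    have h1 : ∀ g : ℕ → ℝ, ∑ k ∈ Icc 1 (N+1), g k = ∑ k ∈ Icc 1 N, g k + g (N+1) := by
      intro g; exact Finset.sum_Icc_succ_top (by omega) g
    have h2 : ∀ k ∈ Icc 1 N, ∑ l ∈ Icc 1 (N+1), f k l = ∑ l ∈ Icc 1 N, f k l + f k (N+1) := by
      intro k hk; exact Finset.sum_Icc_succ_top (by omega) _
    have h3 : ∀ k ∈ Icc 1 N, ∑ l ∈ Ioc k (N+1), f k l = ∑ l ∈ Ioc k N, f k l + f k (N+1) := by
      intro k hk; simp at hk; exact Finset.sum_Ioc_succ_top (by omega) _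
    rw [h1, Finset.sum_congr rfl h2, h1 (fun k => ∑ l ∈ Ioc k (N+1), f k l),
      Finset.sum_congr rfl h3, Finset.sum_add_distrib, Finset.sum_add_distrib, ih]
    have h4 : ∑ l ∈ Icc 1 (N+1), f (N+1) l = ∑ l ∈ Icc 1 N, f (N+1) l + f (N+1) (N+1) :=
      Finset.sum_Icc_succ_top (by omega) _
    rw [h4, hd]
    have h5 : ∑ l ∈ Icc 1 N, f (N+1) l = ∑ l ∈ Icc 1 N, f l (N+1) :=
      Finset.sum_congr rfl (fun l _ => hs _ _)
    have h6 : Ioc (N+1) (N+1) = (∅ : Finset ℕ) := by simp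
    rw [h5, h6]
    simp; ring

noncomputable def stepf (x y s : ℝ) : ℝ := (Set.Ico (min x y) (max x y)).indicator 1 s

lemma stepf_eq (x y s : ℝ) :
    stepf x y s = |(if s < x then (1:ℝ) else 0) - (if s < y then 1 else 0)| := by
  unfold stepf
  rcases le_total x y with h | h
  · rw [min_eq_left h, max_eq_right h]
    by_cases hx : s < x <;> by_cases hy : s < y <;>
      simp [Set.indicator_apply, Set.mem_Ico, hx, hy] <;> first | linarith | norm_num
  · rw [min_eq_right h, max_eq_left h]
    by_cases hx : s < x <;> by_cases hy : s < y <;>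
      simp [Set.indicator_apply, Set.mem_Ico, hx, hy] <;> first | linarith | norm_num

lemma stepf_integrable (x y : ℝ) : Integrable (stepf x y) := by
  unfold stepf
  rw [integrable_indicator_iff measurableSet_Ico]
  exact integrableOn_const (by rw [Real.volume_Ico]; exact ENNReal.ofReal_ne_top)

lemma stepf_integral (x y : ℝ) : ∫ s, stepf x y s = |x - y| := by
  unfold stepf
  rw [MeasureTheory.integral_indicator_one measurableSet_Ico, MeasureTheory.measureReal_def, Real.volume_Ico,
    ENNReal.toReal_ofReal (by simp [min_le_max] : (0:ℝ) ≤ max x y - min x y)]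
  rw [max_sub_min_eq_abs, abs_sub_comm]

lemma sum01 (K L : Finset ℕ) (u v : ℕ → ℝ)
    (hu : ∀ k, u k = 0 ∨ u k = 1) (hv : ∀ l, v l = 0 ∨ v l = 1) :
    ∑ l ∈ L, ∑ k ∈ K, |u k - v l| =
      L.card * (∑ k ∈ K, u k) + K.card * (∑ l ∈ L, v l)
        - 2 * (∑ k ∈ K, u k) * (∑ l ∈ L, v l) := by
  have h : ∀ k l, |u k - v l| = u k + v l - 2 * (u k * v l) := by
    intro k l; rcases hu k with h1|h1 <;> rcases hv l with h2|h2 <;> rw [h1, h2] <;> norm_num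
  calc ∑ l ∈ L, ∑ k ∈ K, |u k - v l|
      = ∑ l ∈ L, ∑ k ∈ K, (u k + v l - 2 * (u k * v l)) :=
        sum_congr rfl fun l _ => sum_congr rfl fun k _ => h k l
    _ = _ := by
        simp only [Finset.sum_add_distrib, Finset.sum_sub_distrib, Finset.sum_const,
          nsmul_eq_mul, ← Finset.mul_sum, ← Finset.sum_mul]
        ring

lemma int_le_sq (d : ℤ) : d ≤ d^2 := by nlinarith [sq_nonneg d, sq_nonneg (d-1)]

lemma pointwise (n : ℕ) (A B : ℕ → ℝ) (s : ℝ) :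
    (1/2) * (∑ k ∈ Icc 1 (n+1), ∑ l ∈ Icc 1 (n+1), stepf (A k) (A l) s)
      + (1/2) * (∑ k ∈ Icc 1 n, ∑ l ∈ Icc 1 n, stepf (B k) (B l) s)
      ≤ ∑ l ∈ Icc 1 n, ∑ k ∈ Icc 1 (n+1), stepf (A k) (B l) s := by
  set u : ℕ → ℝ := fun k => if s < A k then 1 else 0 with hu
  set v : ℕ → ℝ := fun l => if s < B l then 1 else 0 with hv
  have hu01 : ∀ k, u k = 0 ∨ u k = 1 := by
    intro k; by_cases h : s < A k <;> simp [hu, h]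
  have hv01 : ∀ l, v l = 0 ∨ v l = 1 := by
    intro l; by_cases h : s < B l <;> simp [hv, h]
  have eAB : ∀ k l : ℕ, stepf (A k) (B l) s = |u k - v l| := fun k l => stepf_eq _ _ _
  have eAA : ∀ k l : ℕ, stepf (A k) (A l) s = |u l - u k| := by
    intro k l; rw [stepf_eq, abs_sub_comm]
  have eBB : ∀ k l : ℕ, stepf (B k) (B l) s = |v l - v k| := by
    intro k l; rw [stepf_eq, abs_sub_comm]
  rw [Finset.sum_congr rfl (fun l _ => Finset.sum_congr rfl (fun k _ => eAB k l)),
    Finset.sum_congr rfl (fun k _ => Finset.sum_congr rfl (fun l _ => eAA k l)),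
    Finset.sum_congr rfl (fun k _ => Finset.sum_congr rfl (fun l _ => eBB k l)),
    sum01 _ _ u v hu01 hv01, sum01 _ _ u u hu01 hu01, sum01 _ _ v v hv01 hv01]
  have hcard1 : ((Icc 1 (n+1)).card : ℝ) = (n : ℝ) + 1 := by
    rw [Nat.card_Icc]; push_cast; ring
  have hcard2 : ((Icc 1 n).card : ℝ) = (n : ℝ) := by
    rw [Nat.card_Icc]; push_cast [Nat.add_sub_cancel]; ring
  rw [hcard1, hcard2]
  set p : ℝ := ∑ k ∈ Icc 1 (n+1), u k with hp
  set q : ℝ := ∑ l ∈ Icc 1 n, v l with hq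
  have hpc : p = (((Icc 1 (n+1)).filter (fun k => s < A k)).card : ℝ) := by
    rw [hp]; simp [hu, Finset.sum_boole]
  have hqc : q = (((Icc 1 n).filter (fun l => s < B l)).card : ℝ) := by
    rw [hq]; simp [hv, Finset.sum_boole]
  have key : p - q ≤ (p - q)^2 := by
    have h0 := int_le_sq ((((Icc 1 (n+1)).filter (fun k => s < A k)).card : ℤ)
      - (((Icc 1 n).filter (fun l => s < B l)).card : ℤ))
    have h2 : (((((Icc 1 (n+1)).filter (fun k => s < A k)).card : ℤ)
      - (((Icc 1 n).filter (fun l => s < B l)).card : ℤ) : ℤ) : ℝ)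
      ≤ ((((((Icc 1 (n+1)).filter (fun k => s < A k)).card : ℤ)
      - (((Icc 1 n).filter (fun l => s < B l)).card : ℤ))^2 : ℤ) : ℝ) := by exact_mod_cast h0
    push_cast at h2
    rw [hpc, hqc]; nlinarith [h2]
  nlinarith [key]

lemma main_aux (n : ℕ) (A B : ℕ → ℝ) :
    0 ≤ (∑ l ∈ Icc 1 n, ∑ k ∈ Icc 1 (n+1), |A k - B l|)
      - (∑ k ∈ Icc 1 (n+1), ∑ l ∈ Ioc k (n+1), |A k - A l|)
      - (∑ k ∈ Icc 1 n, ∑ l ∈ Ioc k n, |B l - B k|) := by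
  have sdA := symm_double (n+1) (fun k l => |A k - A l|)
    (fun k l => abs_sub_comm _ _) (fun k => by simp)
  have sdB := symm_double n (fun k l => |B l - B k|)
    (fun k l => abs_sub_comm _ _) (fun k => by simp)
  have hA2 : (∑ k ∈ Icc 1 (n+1), ∑ l ∈ Ioc k (n+1), |A k - A l|)
      = (1/2) * ∑ k ∈ Icc 1 (n+1), ∑ l ∈ Icc 1 (n+1), |A k - A l| := by
    rw [sdA]; ring
  have hB2 : (∑ k ∈ Icc 1 n, ∑ l ∈ Ioc k n, |B l - B k|)
      = (1/2) * ∑ k ∈ Icc 1 n, ∑ l ∈ Icc 1 n, |B l - B k| := by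
    rw [sdB]; ring
  have hB3 : (∑ k ∈ Icc 1 n, ∑ l ∈ Icc 1 n, |B l - B k|)
      = ∑ k ∈ Icc 1 n, ∑ l ∈ Icc 1 n, |B k - B l| :=
    Finset.sum_congr rfl fun k _ => Finset.sum_congr rfl fun l _ => abs_sub_comm _ _
  rw [hA2, hB2, hB3]
  -- now rewrite each abs-sum as an integral
  have I1 : (∑ l ∈ Icc 1 n, ∑ k ∈ Icc 1 (n+1), |A k - B l|)
      = ∫ s, ∑ l ∈ Icc 1 n, ∑ k ∈ Icc 1 (n+1), stepf (A k) (B l) s := by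
    rw [MeasureTheory.integral_finset_sum _
      (fun l _ => integrable_finset_sum _ (fun k _ => stepf_integrable _ _))]
    refine Finset.sum_congr rfl fun l _ => ?_
    rw [MeasureTheory.integral_finset_sum _ (fun k _ => stepf_integrable _ _)]
    exact Finset.sum_congr rfl fun k _ => (stepf_integral _ _).symm
  have I2 : (∑ k ∈ Icc 1 (n+1), ∑ l ∈ Icc 1 (n+1), |A k - A l|)
      = ∫ s, ∑ k ∈ Icc 1 (n+1), ∑ l ∈ Icc 1 (n+1), stepf (A k) (A l) s := by
    rw [MeasureTheory.integral_finset_sum _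
      (fun k _ => integrable_finset_sum _ (fun l _ => stepf_integrable _ _))]
    refine Finset.sum_congr rfl fun k _ => ?_
    rw [MeasureTheory.integral_finset_sum _ (fun l _ => stepf_integrable _ _)]
    exact Finset.sum_congr rfl fun l _ => (stepf_integral _ _).symm
  have I3 : (∑ k ∈ Icc 1 n, ∑ l ∈ Icc 1 n, |B k - B l|)
      = ∫ s, ∑ k ∈ Icc 1 n, ∑ l ∈ Icc 1 n, stepf (B k) (B l) s := by
    rw [MeasureTheory.integral_finset_sum _
      (fun k _ => integrable_finset_sum _ (fun l _ => stepf_integrable _ _))]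
    refine Finset.sum_congr rfl fun k _ => ?_
    rw [MeasureTheory.integral_finset_sum _ (fun l _ => stepf_integrable _ _)]
    exact Finset.sum_congr rfl fun l _ => (stepf_integral _ _).symm
  rw [I1, I2, I3]
  have int1 : Integrable (fun s => ∑ l ∈ Icc 1 n, ∑ k ∈ Icc 1 (n+1), stepf (A k) (B l) s) :=
    integrable_finset_sum _ (fun l _ => integrable_finset_sum _ (fun k _ => stepf_integrable _ _))
  have int2 : Integrable (fun s => ∑ k ∈ Icc 1 (n+1), ∑ l ∈ Icc 1 (n+1), stepf (A k) (A l) s) :=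
    integrable_finset_sum _ (fun k _ => integrable_finset_sum _ (fun l _ => stepf_integrable _ _))
  have int3 : Integrable (fun s => ∑ k ∈ Icc 1 n, ∑ l ∈ Icc 1 n, stepf (B k) (B l) s) :=
    integrable_finset_sum _ (fun k _ => integrable_finset_sum _ (fun l _ => stepf_integrable _ _))
  have keyint : 0 ≤ ∫ s, ((∑ l ∈ Icc 1 n, ∑ k ∈ Icc 1 (n+1), stepf (A k) (B l) s)
      - ((1/2) * (∑ k ∈ Icc 1 (n+1), ∑ l ∈ Icc 1 (n+1), stepf (A k) (A l) s)
        + (1/2) * (∑ k ∈ Icc 1 n, ∑ l ∈ Icc 1 n, stepf (B k) (B l) s))) := by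
    refine MeasureTheory.integral_nonneg fun s => ?_
    have := pointwise n A B s
    simp only [Pi.zero_apply]
    linarith
  have e : (∫ s, ((∑ l ∈ Icc 1 n, ∑ k ∈ Icc 1 (n+1), stepf (A k) (B l) s)
      - ((1/2) * (∑ k ∈ Icc 1 (n+1), ∑ l ∈ Icc 1 (n+1), stepf (A k) (A l) s)
        + (1/2) * (∑ k ∈ Icc 1 n, ∑ l ∈ Icc 1 n, stepf (B k) (B l) s))))
      = (∫ s, ∑ l ∈ Icc 1 n, ∑ k ∈ Icc 1 (n+1), stepf (A k) (B l) s)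
        - ((1/2) * (∫ s, ∑ k ∈ Icc 1 (n+1), ∑ l ∈ Icc 1 (n+1), stepf (A k) (A l) s)
          + (1/2) * (∫ s, ∑ k ∈ Icc 1 n, ∑ l ∈ Icc 1 n, stepf (B k) (B l) s)) := by
    have int2' : Integrable (fun s => (1/2) * (∑ k ∈ Icc 1 (n+1), ∑ l ∈ Icc 1 (n+1), stepf (A k) (A l) s)) volume := int2.const_mul _
    have int3' : Integrable (fun s => (1/2) * (∑ k ∈ Icc 1 n, ∑ l ∈ Icc 1 n, stepf (B k) (B l) s)) volume := int3.const_mul _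
    have int23 : Integrable (fun s => (1/2) * (∑ k ∈ Icc 1 (n+1), ∑ l ∈ Icc 1 (n+1), stepf (A k) (A l) s)
        + (1/2) * (∑ k ∈ Icc 1 n, ∑ l ∈ Icc 1 n, stepf (B k) (B l) s)) volume := int2'.add int3'
    rw [MeasureTheory.integral_sub int1 int23, MeasureTheory.integral_add int2' int3',
      MeasureTheory.integral_const_mul, MeasureTheory.integral_const_mul]
  rw [e] at keyint
  linarith

end Aux

/-- For `n ≥ 1`, `α = (α 1, …, α (n+1))`, `β = (β 1, …, β n)` and `t ∈ ℝ`,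
`r(t, α, β) = Σ_{l=1}^{n} Σ_{k=1}^{n+1} |t + α_k + β_l|
  − Σ_{1 ≤ k < l ≤ n+1} |α_k − α_l| − Σ_{1 ≤ k < l ≤ n} |β_k − β_l|`. -/
noncomputable def rfun (n : ℕ) (t : ℝ) (α β : ℕ → ℝ) : ℝ :=
  (∑ l ∈ Icc 1 n, ∑ k ∈ Icc 1 (n + 1), |t + α k + β l|)
    - (∑ k ∈ Icc 1 (n + 1), ∑ l ∈ Ioc k (n + 1), |α k - α l|)
    - (∑ k ∈ Icc 1 n, ∑ l ∈ Ioc k n, |β k - β l|)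

/-- For every integer `n ≥ 1` and all `α ∈ ℝ^{n+1}`, `β ∈ ℝ^n`, `t ∈ ℝ`, one has
`r(t, α, β) ≥ 0`. -/
theorem statement0 (n : ℕ) (hn : 1 ≤ n) (α β : ℕ → ℝ) (t : ℝ) :
    0 ≤ rfun n t α β := by
  unfold rfun
  have h := main_aux n (fun k => t + α k) (fun l => -β l)
  simp only [neg_sub_neg] at h
  simp only [sub_neg_eq_add, add_sub_add_left_eq_sub] at h
  exact h
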